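/- In a Hausdorff first-order topological structure in which every definable subset X has finite d(X) (where d(X) is the supremum of cardinalities of partitions of X into nonempty definable relatively clopen sets), every discrete definable subset is finite. -/

import Mathlib

open FirstOrder

lemma singleton_definable {L : FirstOrder.Language} {M : Type*} [L.Structure M] (a : M) :
    Set.Definable₁ (Set.univ : Set M) L {a} := by
  rw [Set.Definable₁, Set.definable_iff_exists_formula_sum]
  refine ⟨Language.Term.equal (Language.Term.var (Sum.inr 0))
    (Language.Term.var (Sum.inl ⟨a, Set.mem_univ a⟩)), ?_⟩
  ext v
  simp [Language.Formula.realize_equal]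

lemma def1_union {L : FirstOrder.Language} {M : Type*} [L.Structure M] {s t : Set M}
    (hs : Set.Definable₁ (Set.univ : Set M) L s) (ht : Set.Definable₁ (Set.univ : Set M) L t) :
    Set.Definable₁ (Set.univ : Set M) L (s ∪ t) := by
  have := hs.union ht
  convert this using 1
  exact Iff.rfl

lemma def1_sdiff {L : FirstOrder.Language} {M : Type*} [L.Structure M] {s t : Set M}
    (hs : Set.Definable₁ (Set.univ : Set M) L s) (ht : Set.Definable₁ (Set.univ : Set M) L t) :
    Set.Definable₁ (Set.univ : Set M) L (s \ t) := by
  have := hs.sdiff ht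
  convert this using 1
  exact Iff.rfl

lemma finset_definable {L : FirstOrder.Language} {M : Type*} [L.Structure M] (S : Finset M) :
    Set.Definable₁ (Set.univ : Set M) L (↑S : Set M) := by
  classical
  induction S using Finset.induction_on with
  | empty =>
      have h : {x : Fin 1 → M | x 0 ∈ ((∅ : Finset M) : Set M)} = ∅ := by ext; simp
      rw [Set.Definable₁, h]
      exact Set.definable_empty
  | insert _ _ h ih =>
      rename_i a s
      rw [Finset.coe_insert, Set.insert_eq]
      exact def1_union (singleton_definable a) ih

theorem discrete_definable_finite_of_t2_of_finite_dX
    {L : FirstOrder.Language} {M : Type*} [L.Structure M] [TopologicalSpace M] [T2Space M]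
    {n : ℕ} (B : L.Formula (Fin (n + 1)))
    (hbasis : TopologicalSpace.IsTopologicalBasis
      {s : Set M | ∃ a : Fin n → M, s = {x : M | B.Realize (Fin.cons x a)}})
    (hd : ∀ X : Set M, Set.Definable₁ (Set.univ : Set M) L X →
      ∃ d : ℕ, ∀ P : Finset (Set M),
        (∀ s ∈ P, s.Nonempty) →
        (∀ s ∈ P, Set.Definable₁ (Set.univ : Set M) L s) →
        (∀ s ∈ P, IsClopen ((Subtype.val ⁻¹' s : Set X))) →
        (∀ s ∈ P, s ⊆ X) →
        (P : Set (Set M)).PairwiseDisjoint id →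
        (⋃ s ∈ P, s) = X →
        P.card ≤ d)
    (X : Set M) (hXdef : Set.Definable₁ (Set.univ : Set M) L X)
    (hXdisc : DiscreteTopology X) :
    X.Finite := by
  classical
  by_contra hfin
  have hinf : X.Infinite := hfin
  obtain ⟨d, hdbound⟩ := hd X hXdef
  obtain ⟨S, hSsub, hScard⟩ := hinf.exists_subset_card_eq (d + 1)
  have hdiffne : (X \ ↑S).Nonempty := (hinf.diff S.finite_toSet).nonempty
  set P : Finset (Set M) := insert (X \ ↑S) (S.image fun x => ({x} : Set M)) with hP
  have hmem : ∀ s ∈ P, s = X \ ↑S ∨ ∃ x ∈ S, s = {x} := by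
    intro s hs
    rw [hP, Finset.mem_insert, Finset.mem_image] at hs
    rcases hs with h | ⟨x, hx, rfl⟩
    · exact Or.inl h
    · exact Or.inr ⟨x, hx, rfl⟩
  have hcard : d + 1 ≤ P.card := by
    have h1 : (S.image fun x => ({x} : Set M)).card = d + 1 := by
      rw [Finset.card_image_of_injective _ (fun a b h => by
        simpa using Set.singleton_eq_singleton_iff.mp h), hScard]
    calc d + 1 = (S.image fun x => ({x} : Set M)).card := h1.symm
      _ ≤ P.card := Finset.card_le_card (Finset.subset_insert _ _)
  have hle := hdbound P
    (by
      intro s hs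
      rcases hmem s hs with rfl | ⟨x, hx, rfl⟩
      · exact hdiffne
      · exact Set.singleton_nonempty x)
    (by
      intro s hs
      rcases hmem s hs with rfl | ⟨x, hx, rfl⟩
      · exact def1_sdiff hXdef (finset_definable S)
      · exact singleton_definable x)
    (fun s _ => isClopen_discrete _)
    (by
      intro s hs
      rcases hmem s hs with rfl | ⟨x, hx, rfl⟩
      · exact Set.diff_subset
      · exact Set.singleton_subset_iff.mpr (hSsub hx))
    (by
      intro s hs t ht hst
      rcases hmem s hs with rfl | ⟨x, hx, rfl⟩ <;> rcases hmem t ht with rfl | ⟨y, hy, rfl⟩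
      · exact absurd rfl hst
      · exact Set.disjoint_left.mpr (fun a ha hb => ha.2 (by simp_all))
      · exact Set.disjoint_left.mpr (fun a ha hb => hb.2 (by simp_all))
      · refine Set.disjoint_left.mpr (fun a ha hb => hst ?_)
        simp only [id, Set.mem_singleton_iff] at ha hb; subst ha; subst hb; rfl)
    (by
      apply subset_antisymm
      · intro a ha
        simp only [Set.mem_iUnion] at ha
        obtain ⟨s, hs, has⟩ := ha
        rcases hmem s hs with rfl | ⟨x, hx, rfl⟩
        · exact has.1
        · rw [Set.mem_singleton_iff] at has; subst has; exact hSsub hx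
      · intro a ha
        by_cases haS : a ∈ S
        · simp only [Set.mem_iUnion]
          exact ⟨{a}, Finset.mem_insert_of_mem (Finset.mem_image_of_mem _ haS), rfl⟩
        · simp only [Set.mem_iUnion]
          exact ⟨X \ ↑S, Finset.mem_insert_self _ _, ha, haS⟩)
  omega
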